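/- (Theorem 2, upper bound and weak ergodicity for the birth–death–catastrophe process.) In the BDCP setting, assume additionally that H(t) := D B(t) D⁻¹ is essentially nonnegative for every t ≥ 0, and set α_k(t) = −∑_{i=1}^S H(t)_{ik} for 1 ≤ k ≤ S and β^*(t) = min_{1≤k≤S} α_k(t). Then for any two differentiable functions z*, z** : [0,∞) → ℝ^S satisfying z'(t) = B(t)z(t) + f(t) for all t ≥ 0, where f(t) = (λ_0(t), 0, …, 0)ᵀ, one has ‖D(z*(t) − z**(t))‖₁ ≤ exp(−∫₀ᵗ β^*(τ) dτ) · ‖D(z*(0) − z**(0))‖₁ for all t ≥ 0; moreover, if ∫₀^∞ β^*(t) dt = +∞ then ‖z*(t) − z**(t)‖₁ → 0 as t → ∞. -/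

import Mathlib

open Set Filter Topology

/-- The reduced (transposed-intensity) matrix `B(t)` of a finite
birth–death–catastrophe process on `{0,…,S}` with birth rates `λ_k`, death
rates `μ_k` and catastrophe rates `ξ_k` (1-based indices `1,…,S` encoded by
`i : Fin S ↦ i+1`): `B_{ij} = T_{ij} − λ₀·[i = 1]` where `T` is tridiagonal
with `T_{i,i−1} = λ_{i−1}`, `T_{i,i+1} = μ_{i+1}`,
`T_{ii} = −(λ_i + μ_i + ξ_i)`. -/
def bdcpB (S : ℕ) (lam mu xi : ℕ → ℝ → ℝ) (t : ℝ) : Matrix (Fin S) (Fin S) ℝ :=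
  fun i j =>
    (if (i : ℕ) = (j : ℕ) + 1 then lam (i : ℕ) t
     else if (j : ℕ) = (i : ℕ) + 1 then mu ((i : ℕ) + 2) t
     else if i = j then -(lam ((i : ℕ) + 1) t + mu ((i : ℕ) + 1) t + xi ((i : ℕ) + 1) t)
     else 0)
    - (if (i : ℕ) = 0 then lam 0 t else 0)

/-- The upper-triangular matrix `D` with `D_{kj} = d_k` for `j ≥ k`
(1-based weights `d_1,…,d_S`). -/
def triD (S : ℕ) (d : ℕ → ℝ) : Matrix (Fin S) (Fin S) ℝ :=
  fun i j => if i ≤ j then d ((i : ℕ) + 1) else 0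

/-- Theorem 2 (upper bound and weak ergodicity) for the
birth–death–catastrophe process. -/
theorem bdcp_upper_bound_and_ergodicity
    (S : ℕ) (hS : 1 ≤ S)
    (lam mu xi : ℕ → ℝ → ℝ) (d : ℕ → ℝ)
    (hlam : ∀ k < S, ContinuousOn (lam k) (Ici 0) ∧ ∀ t ∈ Ici (0 : ℝ), 0 ≤ lam k t)
    (hmu : ∀ k, 1 ≤ k → k ≤ S →
      ContinuousOn (mu k) (Ici 0) ∧ ∀ t ∈ Ici (0 : ℝ), 0 ≤ mu k t)
    (hxi : ∀ k, 1 ≤ k → k ≤ S →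
      ContinuousOn (xi k) (Ici 0) ∧ ∀ t ∈ Ici (0 : ℝ), 0 ≤ xi k t)
    (hlamS : ∀ t, lam S t = 0) (hmu0 : ∀ t, mu 0 t = 0)
    (hd : ∀ k, 1 ≤ k → k ≤ S → 0 < d k)
    (H : ℝ → Matrix (Fin S) (Fin S) ℝ)
    (hH : ∀ t, H t = triD S d * bdcpB S lam mu xi t * (triD S d)⁻¹)
    (hHess : ∀ t ∈ Ici (0 : ℝ), ∀ i j, i ≠ j → 0 ≤ H t i j)
    (alpha : Fin S → ℝ → ℝ)
    (halpha : ∀ k t, alpha k t = -∑ i, H t i k)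
    (bstar : ℝ → ℝ) (hbstar : ∀ t, bstar t = ⨅ k, alpha k t)
    (f : ℝ → Fin S → ℝ)
    (hf : ∀ t, ∀ i : Fin S, f t i = if (i : ℕ) = 0 then lam 0 t else 0)
    (z₁ z₂ : ℝ → Fin S → ℝ)
    (hz₁ : ∀ t ∈ Ici (0 : ℝ), ∀ i, HasDerivWithinAt (fun s => z₁ s i)
      ((bdcpB S lam mu xi t).mulVec (z₁ t) i + f t i) (Ici 0) t)
    (hz₂ : ∀ t ∈ Ici (0 : ℝ), ∀ i, HasDerivWithinAt (fun s => z₂ s i)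
      ((bdcpB S lam mu xi t).mulVec (z₂ t) i + f t i) (Ici 0) t) :
    (∀ t ∈ Ici (0 : ℝ),
      ∑ i, |(triD S d).mulVec (z₁ t - z₂ t) i| ≤
        Real.exp (-∫ τ in (0 : ℝ)..t, bstar τ) *
          ∑ i, |(triD S d).mulVec (z₁ 0 - z₂ 0) i|) ∧
    (Tendsto (fun T => ∫ τ in (0 : ℝ)..T, bstar τ) atTop atTop →
      Tendsto (fun t => ∑ i, |z₁ t i - z₂ t i|) atTop (nhds 0)) := by
  haveI hne : Nonempty (Fin S) := ⟨⟨0, hS⟩⟩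
  set D : Matrix (Fin S) (Fin S) ℝ := triD S d with hDdef
  set Bm : ℝ → Matrix (Fin S) (Fin S) ℝ := bdcpB S lam mu xi with hBmdef
  -- D is invertible
  have hdet : IsUnit D.det := by
    have htri : D.BlockTriangular id := by
      intro i j hij
      have : ¬ (i ≤ j) := by
        simp only [id] at hij
        exact not_le.mpr hij
      simp [hDdef, triD, this]
    rw [Matrix.det_of_upperTriangular htri]
    refine isUnit_iff_ne_zero.mpr (Finset.prod_ne_zero_iff.mpr ?_)
    intro i _
    have hpos := hd ((i : ℕ) + 1) (by omega) (by have := i.isLt; omega)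
    simp [hDdef, triD]
    exact ne_of_gt hpos
  have hDinvD : D⁻¹ * D = 1 := Matrix.nonsing_inv_mul D hdet
  have hHD : ∀ t, H t * D = D * Bm t := by
    intro t
    rw [hH t, Matrix.mul_assoc (D * bdcpB S lam mu xi t) _ _, hDinvD, Matrix.mul_one]
  -- the difference w and its derivative
  have hw : ∀ t ∈ Ici (0:ℝ), ∀ i, HasDerivWithinAt (fun s => z₁ s i - z₂ s i)
      ((Bm t).mulVec (z₁ t - z₂ t) i) (Ici 0) t := by
    intro t ht i
    have h := (hz₁ t ht i).sub (hz₂ t ht i)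
    refine h.congr_deriv ?_
    rw [Matrix.mulVec_sub, Pi.sub_apply]; ring
  -- y = D (z₁ - z₂)
  set y : ℝ → Fin S → ℝ := fun t => D.mulVec (z₁ t - z₂ t) with hydef
  have hy' : ∀ t ∈ Ici (0:ℝ), ∀ i, HasDerivWithinAt (fun s => y s i)
      ((H t).mulVec (y t) i) (Ici 0) t := by
    intro t ht i
    have h : HasDerivWithinAt (fun s => ∑ j, D i j * (z₁ s j - z₂ s j))
        (∑ j, D i j * (Bm t).mulVec (z₁ t - z₂ t) j) (Ici 0) t :=
      HasDerivWithinAt.fun_sum fun j _ => (hw t ht j).const_mul _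
    have e1 : (fun s => y s i) = fun s => ∑ j, D i j * (z₁ s j - z₂ s j) := by
      funext s; simp [hydef, Matrix.mulVec, dotProduct]
    have e2 : (H t).mulVec (y t) i = ∑ j, D i j * (Bm t).mulVec (z₁ t - z₂ t) j := by
      have e3 : (H t).mulVec (y t) = (D * Bm t).mulVec (z₁ t - z₂ t) := by
        rw [hydef, Matrix.mulVec_mulVec, hHD]
      rw [e3, ← Matrix.mulVec_mulVec]
      simp [Matrix.mulVec, dotProduct]
    rw [e1, e2]; exact h
  set g : ℝ → ℝ := fun t => ∑ i, |y t i| with hgdef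
  have hg0 : ∀ t, 0 ≤ g t := fun t => Finset.sum_nonneg fun i _ => abs_nonneg _
  have hgcont : ContinuousOn g (Ici 0) := by
    apply continuousOn_finset_sum
    intro i _
    exact ContinuousOn.abs (fun t ht => ((hy' t ht i).continuousWithinAt))
  -- continuity of matrix entries
  have hlc : ∀ k ≤ S, ContinuousOn (lam k) (Ici 0) := by
    intro k hk
    rcases lt_or_eq_of_le hk with h | h
    · exact (hlam k h).1
    · have : lam k = fun _ => 0 := funext (by rw [h]; exact hlamS)
      rw [this]; exact continuousOn_const
  have hBcont : ∀ i j : Fin S, ContinuousOn (fun t => Bm t i j) (Ici 0) := by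
    intro i j
    have hi := i.isLt
    have hj := j.isLt
    simp only [hBmdef, bdcpB]
    apply ContinuousOn.sub
    · split_ifs with h1 h2 h3
      · exact hlc _ (by omega)
      · exact (hmu ((i : ℕ) + 2) (by omega) (by omega)).1
      · exact (((hlc _ (by omega)).add (hmu ((i:ℕ)+1) (by omega) (by omega)).1).add
          (hxi ((i:ℕ)+1) (by omega) (by omega)).1).neg
      · exact continuousOn_const
    · split_ifs
      · exact hlc 0 (by omega)
      · exact continuousOn_const
  have hHcont : ∀ i j : Fin S, ContinuousOn (fun t => H t i j) (Ici 0) := by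
    intro i j
    have e : (fun t => H t i j) = fun t => ∑ l, (∑ k, D i k * Bm t k l) * D⁻¹ l j := by
      funext t; rw [hH t]
      simp [Matrix.mul_apply]
    rw [e]
    apply continuousOn_finset_sum
    intro l _
    exact (continuousOn_finset_sum _ fun k _ =>
      (continuousOn_const.mul (hBcont k l))).mul continuousOn_const
  have halphacont : ∀ k, ContinuousOn (alpha k) (Ici 0) := by
    intro k
    have e : alpha k = fun t => -∑ i, H t i k := funext fun t => halpha k t
    rw [e]
    exact (continuousOn_finset_sum _ fun i _ => hHcont i k).neg
  have hbcont : ContinuousOn bstar (Ici 0) := by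
    have e : bstar = fun t => Finset.univ.inf' Finset.univ_nonempty (fun k => alpha k t) := by
      funext t; rw [hbstar, ← Finset.inf'_univ_eq_ciInf]
    rw [e]
    intro t ht
    exact ContinuousWithinAt.finset_inf'_apply Finset.univ_nonempty
      (fun i _ => (halphacont i t ht))
  have hble : ∀ t k, bstar t ≤ alpha k t := by
    intro t k; rw [hbstar]
    exact ciInf_le (Set.Finite.bddBelow (Set.finite_range _)) k
  -- the extended bstar and its primitive
  set bt : ℝ → ℝ := fun τ => bstar (max τ 0) with hbtdef
  have hbtcont : Continuous bt :=
    hbcont.comp_continuous (continuous_id.max continuous_const) (fun x => Set.mem_Ici.mpr (le_max_right _ _))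
  have hbtx : ∀ x : ℝ, 0 ≤ x → bt x = bstar x := by
    intro x hx; simp [hbtdef, max_eq_left hx]
  set I : ℝ → ℝ := fun s => ∫ τ in (0:ℝ)..s, bt τ with hIdef
  have hI' : ∀ x, HasDerivAt I (bt x) x := fun x =>
    intervalIntegral.integral_hasDerivAt_right (hbtcont.intervalIntegrable _ _)
      (hbtcont.stronglyMeasurableAtFilter _ _) hbtcont.continuousAt
  have hIeq : ∀ t, 0 ≤ t → I t = ∫ τ in (0:ℝ)..t, bstar τ := by
    intro t ht
    apply intervalIntegral.integral_congr
    intro τ hτ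
    rw [uIcc_of_le ht] at hτ
    exact hbtx τ hτ.1
  -- slope bound for g
  have slope_bound : ∀ x ∈ Ici (0:ℝ), ∃ L, L ≤ -bstar x * g x ∧
      Tendsto (slope g x) (𝓝[>] x) (𝓝 L) := by
    intro x hx
    have hIoi : Ioi x ⊆ Ici (0:ℝ) := fun z hz => Set.mem_Ici.mpr (le_trans hx (le_of_lt hz))
    have hxIoi : x ∉ Ioi x := fun h => lt_irrefl x h
    have hiy : ∀ i : Fin S, ∃ Li, Li ≤ ∑ j, H x i j * |y x j| ∧
        Tendsto (slope (fun s => |y s i|) x) (𝓝[>] x) (𝓝 Li) := by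
      intro i
      have hd' : HasDerivWithinAt (fun s => y s i) ((H x).mulVec (y x) i) (Ioi x) x :=
        (hy' x hx i).mono hIoi
      have hmv : (H x).mulVec (y x) i = ∑ j, H x i j * y x j := by
        simp [Matrix.mulVec, dotProduct]
      rcases lt_trichotomy (y x i) 0 with hlt | heq0 | hgt
      · refine ⟨-(H x).mulVec (y x) i, ?_, ?_⟩
        · rw [hmv, ← Finset.sum_neg_distrib]
          apply Finset.sum_le_sum
          intro j _
          rw [← mul_neg]
          by_cases hji : j = i
          · subst hji; rw [abs_of_neg hlt]
          · exact mul_le_mul_of_nonneg_left (neg_le_abs _) (hHess x hx i j (Ne.symm hji))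
        · have hev : ∀ᶠ z in 𝓝[Ioi x] x, y z i < 0 :=
            hd'.continuousWithinAt (Iio_mem_nhds hlt)
          have habs : HasDerivWithinAt (fun s => |y s i|) (-(H x).mulVec (y x) i) (Ioi x) x := by
            refine HasDerivWithinAt.congr_of_eventuallyEq hd'.neg ?_ (abs_of_neg hlt)
            exact hev.mono fun z hz => abs_of_neg hz
          exact (hasDerivWithinAt_iff_tendsto_slope' hxIoi).1 habs
      · refine ⟨|(H x).mulVec (y x) i|, ?_, ?_⟩
        · calc |(H x).mulVec (y x) i| = |∑ j, H x i j * y x j| := by rw [hmv]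
            _ ≤ ∑ j, |H x i j * y x j| := Finset.abs_sum_le_sum_abs _ _
            _ ≤ ∑ j, H x i j * |y x j| := by
                apply Finset.sum_le_sum
                intro j _
                by_cases hji : j = i
                · subst hji; simp [heq0]
                · rw [abs_mul, abs_of_nonneg (hHess x hx i j (Ne.symm hji))]
        · have h1 := (hasDerivWithinAt_iff_tendsto_slope' hxIoi).1 hd'
          have h2 : Tendsto (fun z => |slope (fun s => y s i) x z|) (𝓝[>] x)
              (𝓝 |(H x).mulVec (y x) i|) := h1.abs
          apply Filter.Tendsto.congr' ?_ h2
          refine eventually_mem_nhdsWithin.mono fun z hz => ?_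
          show |slope (fun s => y s i) x z| = slope (fun s => |y s i|) x z
          simp only [slope_def_field, heq0, sub_zero, abs_zero]
          rw [abs_div, abs_of_pos (sub_pos.mpr hz)]
      · refine ⟨(H x).mulVec (y x) i, ?_, ?_⟩
        · rw [hmv]
          apply Finset.sum_le_sum
          intro j _
          by_cases hji : j = i
          · subst hji; rw [abs_of_pos hgt]
          · exact mul_le_mul_of_nonneg_left (le_abs_self _) (hHess x hx i j (Ne.symm hji))
        · have hev : ∀ᶠ z in 𝓝[Ioi x] x, 0 < y z i :=
            hd'.continuousWithinAt (Ioi_mem_nhds hgt)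
          have habs : HasDerivWithinAt (fun s => |y s i|) ((H x).mulVec (y x) i) (Ioi x) x := by
            refine HasDerivWithinAt.congr_of_eventuallyEq hd' ?_ (abs_of_pos hgt)
            exact hev.mono fun z hz => abs_of_pos hz
          exact (hasDerivWithinAt_iff_tendsto_slope' hxIoi).1 habs
    choose L hL1 hL2 using hiy
    refine ⟨∑ i, L i, ?_, ?_⟩
    · calc ∑ i, L i ≤ ∑ i, ∑ j, H x i j * |y x j| := Finset.sum_le_sum fun i _ => hL1 i
        _ = ∑ j, (∑ i, H x i j) * |y x j| := by
            rw [Finset.sum_comm]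
            exact Finset.sum_congr rfl fun j _ => by rw [Finset.sum_mul]
        _ = ∑ j, (-alpha j x) * |y x j| := by
            exact Finset.sum_congr rfl fun j _ => by rw [halpha]; ring
        _ ≤ ∑ j, (-bstar x) * |y x j| := Finset.sum_le_sum fun j _ =>
            mul_le_mul_of_nonneg_right (neg_le_neg (hble x j)) (abs_nonneg _)
        _ = -bstar x * g x := by rw [hgdef, Finset.mul_sum]
    · have e : ∀ z, slope g x z = ∑ i, slope (fun s => |y s i|) x z := by
        intro z
        simp only [slope_def_field, hgdef, ← Finset.sum_div, Finset.sum_sub_distrib]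
      rw [funext e]
      exact tendsto_finset_sum _ fun i _ => hL2 i
  -- Gronwall with ε
  have main : ∀ t, 0 ≤ t → ∀ ε : ℝ, 0 < ε → g t ≤ (g 0 + ε) * Real.exp (-I t + ε * t) := by
    intro t ht ε hε
    set Bd : ℝ → ℝ := fun s => (g 0 + ε) * Real.exp (-I s + ε * s) with hBddef
    have hBdpos : ∀ s, 0 < Bd s :=
      fun s => mul_pos (by have := hg0 0; linarith) (Real.exp_pos _)
    have hBderiv : ∀ s, HasDerivAt Bd ((-bt s + ε) * Bd s) s := by
      intro s
      have h1 : HasDerivAt (fun u : ℝ => -I u + ε * u) (-bt s + ε) s := by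
        have h2 := ((hI' s).neg).add ((hasDerivAt_id s).const_mul ε)
        rw [show (-bt s + ε) = -bt s + ε * 1 by ring]; exact h2
      have h3 := (h1.exp).const_mul (g 0 + ε)
      refine h3.congr_deriv ?_
      show _ = (-bt s + ε) * ((g 0 + ε) * Real.exp (-I s + ε * s)); ring
    have happ := image_le_of_liminf_slope_right_lt_deriv_boundary'
      (f := g) (f' := fun x => -bstar x * g x) (a := 0) (b := t)
      (B := Bd) (B' := fun s => (-bt s + ε) * Bd s)
      (hgcont.mono (Icc_subset_Ici_self))
      ?_ ?_ ?_ ?_ ?_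
    · exact happ ⟨ht, le_rfl⟩
    · -- slope condition
      intro x hx r hr
      obtain ⟨L, hL, hT⟩ := slope_bound x hx.1
      have hev : ∀ᶠ z in 𝓝[>] x, slope g x z < r :=
        hT.eventually (eventually_lt_nhds (lt_of_le_of_lt hL hr))
      exact hev.frequently
    · -- initial condition
      have : Bd 0 = (g 0 + ε) := by
        simp [hBddef, hIdef, intervalIntegral.integral_same]
      rw [this]; linarith
    · exact fun s _ => (hBderiv s).continuousAt.continuousWithinAt
    · exact fun x _ => (hBderiv x).hasDerivWithinAt
    · -- contact condition
      intro x hx hc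
      show -bstar x * g x < (-bt x + ε) * Bd x
      rw [hc, hbtx x hx.1]
      have := hBdpos x
      nlinarith
  -- limit ε → 0
  have part1 : ∀ t, 0 ≤ t → g t ≤ Real.exp (-I t) * g 0 := by
    intro t ht
    have hlim : Tendsto (fun ε : ℝ => (g 0 + ε) * Real.exp (-I t + ε * t)) (𝓝[>] (0:ℝ))
        (𝓝 ((g 0 + 0) * Real.exp (-I t + 0 * t))) := by
      apply Tendsto.mono_left ?_ nhdsWithin_le_nhds
      exact ((continuous_const.add continuous_id).mul
        ((continuous_const.add (continuous_id.mul continuous_const)).rexp)).tendsto 0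
    have hev : ∀ᶠ ε in 𝓝[>] (0:ℝ), g t ≤ (g 0 + ε) * Real.exp (-I t + ε * t) :=
      (eventually_mem_nhdsWithin (a := (0:ℝ)) (s := Ioi (0:ℝ))).mono
        fun ε hε => main t ht ε hε
    have h := ge_of_tendsto hlim hev
    calc g t ≤ (g 0 + 0) * Real.exp (-I t + 0 * t) := h
      _ = Real.exp (-I t) * g 0 := by ring_nf
  have key1 : ∀ t ∈ Ici (0:ℝ),
      ∑ i, |(triD S d).mulVec (z₁ t - z₂ t) i| ≤
        Real.exp (-∫ τ in (0 : ℝ)..t, bstar τ) *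
          ∑ i, |(triD S d).mulVec (z₁ 0 - z₂ 0) i| := by
    intro t ht
    have := part1 t ht
    rw [hIeq t ht] at this
    exact this
  refine ⟨key1, ?_⟩
  -- Part 2: weak ergodicity
  intro hInt
  have hwinv : ∀ t i, z₁ t i - z₂ t i = ∑ j, D⁻¹ i j * y t j := by
    intro t i
    have e : D⁻¹.mulVec (y t) = z₁ t - z₂ t := by
      rw [hydef, Matrix.mulVec_mulVec, hDinvD, Matrix.one_mulVec]
    calc z₁ t i - z₂ t i = (z₁ t - z₂ t) i := rfl
      _ = D⁻¹.mulVec (y t) i := (congrFun e i).symm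
      _ = ∑ j, D⁻¹ i j * y t j := by simp [Matrix.mulVec, dotProduct]
  set c : ℝ := ∑ i : Fin S, ∑ j : Fin S, |D⁻¹ i j| with hcdef
  have hcnn : 0 ≤ c := Finset.sum_nonneg fun i _ => Finset.sum_nonneg fun j _ => abs_nonneg _
  have hbound : ∀ t, 0 ≤ t → ∑ i, |z₁ t i - z₂ t i| ≤ c * g t := by
    intro t ht
    have h1 : ∀ i : Fin S, |z₁ t i - z₂ t i| ≤ ∑ j, |D⁻¹ i j| * g t := by
      intro i
      rw [hwinv t i]
      calc |∑ j, D⁻¹ i j * y t j| ≤ ∑ j, |D⁻¹ i j * y t j| := Finset.abs_sum_le_sum_abs _ _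
        _ ≤ ∑ j, |D⁻¹ i j| * g t := Finset.sum_le_sum fun j _ => by
            rw [abs_mul]
            exact mul_le_mul_of_nonneg_left
              (Finset.single_le_sum (f := fun k => |y t k|)
                (fun k _ => abs_nonneg _) (Finset.mem_univ j)) (abs_nonneg _)
    calc ∑ i, |z₁ t i - z₂ t i| ≤ ∑ i : Fin S, ∑ j : Fin S, |D⁻¹ i j| * g t :=
          Finset.sum_le_sum fun i _ => h1 i
      _ = c * g t := by
          rw [hcdef, Finset.sum_mul]
          exact Finset.sum_congr rfl fun i _ => by rw [Finset.sum_mul]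
  have hexp : Tendsto (fun t => Real.exp (-∫ τ in (0:ℝ)..t, bstar τ)) atTop (𝓝 0) :=
    Real.tendsto_exp_atBot.comp (tendsto_neg_atTop_atBot.comp hInt)
  have hrhs : Tendsto (fun t => c * (Real.exp (-∫ τ in (0:ℝ)..t, bstar τ) * g 0)) atTop (𝓝 0) := by
    have := ((hexp.mul_const (g 0)).const_mul c)
    simpa using this
  apply squeeze_zero' ?_ ?_ hrhs
  · exact Eventually.of_forall fun t => Finset.sum_nonneg fun i _ => abs_nonneg _
  · refine (eventually_ge_atTop (0:ℝ)).mono fun t ht => ?_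
    calc ∑ i, |z₁ t i - z₂ t i| ≤ c * g t := hbound t ht
      _ ≤ c * (Real.exp (-∫ τ in (0:ℝ)..t, bstar τ) * g 0) := by
          apply mul_le_mul_of_nonneg_left ?_ hcnn
          exact key1 t ht
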